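/- arXiv:1511.04771 — 5 statements merged into one kernel-verified Lean document; each statement's English description precedes it below -/
import Mathlib

section
/- Let A ∈ ℂ^{p×p}, x_i an eigenvalue of A, and let {v_{0,j}, v_{1,j}, ..., v_{κ-1,j}} be a Jordan chain for A at x_i, i.e., (x_i I_p - A)v_{0,j} = 0 and (x_i I_p - A)v_{r,j} = -v_{r-1,j} for 1 ≤ r ≤ κ-1. Define the vector polynomial v_j(x) = Σ_{r=0}^{κ-1} v_{r,j}(x - x_i)^r. Then for any matrix polynomial P(x) ∈ ℂ^{p×p}[x] and for all r with 0 ≤ r ≤ κ-1, (1/r!) d^r/dx^r [P(x)v_j(x)] evaluated at x = x_i equals P(A) v_{r,j}, where P(A) is the right evaluation of P at A. -/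
open Polynomial Matrix

open Finset

lemma sum_mulVec {p : ℕ} {ι : Type*} (s : Finset ι) (M : ι → Matrix (Fin p) (Fin p) ℂ)
    (w : Fin p → ℂ) : (∑ i ∈ s, M i).mulVec w = ∑ i ∈ s, (M i).mulVec w := by
  ext j
  simp only [Matrix.mulVec, dotProduct, Finset.sum_apply, Matrix.sum_apply,
    Finset.sum_mul]
  rw [Finset.sum_comm]

lemma natCast_mulVec {p : ℕ} (k : ℕ) (w : Fin p → ℂ) :
    ((k : Matrix (Fin p) (Fin p) ℂ)).mulVec w = (k : ℂ) • w := by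
  have : (k : Matrix (Fin p) (Fin p) ℂ) = (k : ℂ) • 1 := by
    rw [Nat.cast_smul_eq_nsmul, nsmul_eq_mul, mul_one]
  rw [this, Matrix.smul_mulVec, Matrix.one_mulVec]

lemma auxB (p : ℕ) (A : Matrix (Fin p) (Fin p) ℂ) (xi : ℂ) (κ : ℕ)
    (v : ℕ → Fin p → ℂ)
    (h0 : (xi • (1 : Matrix (Fin p) (Fin p) ℂ) - A).mulVec (v 0) = 0)
    (hchain : ∀ r, 0 < r → r < κ →
      (xi • (1 : Matrix (Fin p) (Fin p) ℂ) - A).mulVec (v r) = -(v (r - 1))) :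
    ∀ m s, s < κ → ((A - xi • 1)^m).mulVec (v s) = if m ≤ s then v (s - m) else 0 := by
  have hB : ∀ s, s < κ → (A - xi • 1).mulVec (v s) = if s = 0 then 0 else v (s - 1) := by
    intro s hs
    have h : A - xi • 1 = -(xi • (1 : Matrix (Fin p) (Fin p) ℂ) - A) := (neg_sub _ _).symm
    rw [h, Matrix.neg_mulVec]
    rcases Nat.eq_zero_or_pos s with h | h
    · simp [h, h0]
    · simp [Nat.pos_iff_ne_zero.mp h, hchain s h hs]
  intro m
  induction m with
  | zero => intro s hs; simp
  | succ m ih =>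
      intro s hs
      rw [pow_succ, ← Matrix.mulVec_mulVec, hB s hs]
      rcases Nat.eq_zero_or_pos s with h | h
      · rw [if_pos h, Matrix.mulVec_zero, if_neg (by omega)]
      · rw [if_neg (by omega), ih (s-1) (by omega)]
        have hcond : m ≤ s - 1 ↔ m + 1 ≤ s := by omega
        by_cases hc : m + 1 ≤ s
        · rw [if_pos (hcond.mpr hc), if_pos hc, show s - 1 - m = s - (m+1) from by omega]
        · rw [if_neg (fun hh => hc (hcond.mp hh)), if_neg hc]

lemma auxA (p : ℕ) (A : Matrix (Fin p) (Fin p) ℂ) (xi : ℂ) (κ : ℕ)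
    (v : ℕ → Fin p → ℂ)
    (h0 : (xi • (1 : Matrix (Fin p) (Fin p) ℂ) - A).mulVec (v 0) = 0)
    (hchain : ∀ r, 0 < r → r < κ →
      (xi • (1 : Matrix (Fin p) (Fin p) ℂ) - A).mulVec (v r) = -(v (r - 1))) :
    ∀ k r, r < κ → (A ^ k).mulVec (v r)
      = ∑ m ∈ range (k+1), ((k.choose m : ℂ) * xi^(k-m)) •
          (if m ≤ r then v (r - m) else 0) := by
  intro k r hr
  set B := A - xi • 1 with hBdef
  have hA : A = B + xi • 1 := by rw [hBdef, sub_add_cancel]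
  have hcomm : Commute B (xi • (1 : Matrix (Fin p) (Fin p) ℂ)) := by
    unfold Commute SemiconjBy
    rw [mul_smul_comm, smul_mul_assoc, mul_one, one_mul]
  rw [hA, hcomm.add_pow, sum_mulVec]
  refine Finset.sum_congr rfl fun m hm => ?_
  have hnat : ((k.choose m : ℕ) : Matrix (Fin p) (Fin p) ℂ) = (k.choose m : ℂ) • 1 := by
    rw [Nat.cast_smul_eq_nsmul, nsmul_eq_mul, mul_one]
  have key : B ^ m * (xi • 1) ^ (k - m) * ((k.choose m : ℕ) : Matrix (Fin p) (Fin p) ℂ)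
      = ((k.choose m : ℂ) * xi ^ (k - m)) • B ^ m := by
    rw [_root_.smul_pow, one_pow, hnat]
    simp only [Matrix.mul_smul, Matrix.mul_one, smul_smul]
  rw [key, Matrix.smul_mulVec, auxB p A xi κ v h0 hchain m r hr]


lemma aux1 (Q : ℂ[X]) (n : ℕ) (h : Q.natDegree ≤ n) (m : ℕ) (xi : ℂ) :
    eval xi (hasseDeriv m Q) = ∑ k ∈ range (n+1), (k.choose m : ℂ) * Q.coeff k * xi^(k-m) := by
  conv_lhs => rw [Q.as_sum_range' (n+1) (Nat.lt_succ_of_le h)]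
  rw [map_sum, eval_finset_sum]
  refine Finset.sum_congr rfl fun k _ => ?_
  rw [hasseDeriv_monomial, eval_monomial]

lemma auxL (xi : ℂ) (κ r : ℕ) (hr : r < κ) (Q : ℂ[X]) (c : ℕ → ℂ) :
    ((r.factorial : ℂ))⁻¹ * eval xi (derivative^[r]
        (Q * ∑ s ∈ range κ, C (c s) * (X - C xi)^s))
      = ∑ m ∈ range (r+1), eval xi (hasseDeriv m Q) * c (r-m) := by
  set f := Q * ∑ s ∈ range κ, C (c s) * (X - C xi)^s with hf
  have h1 : derivative^[r] f = r.factorial • hasseDeriv r f := by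
    rw [← factorial_smul_hasseDeriv]; rfl
  have h2 : eval xi (derivative^[r] f) = (r.factorial : ℂ) * eval xi (hasseDeriv r f) := by
    rw [h1]; simp [nsmul_eq_mul]
  rw [h2, ← mul_assoc, inv_mul_cancel₀ (by exact_mod_cast r.factorial_ne_zero), one_mul]
  rw [← taylor_coeff]
  rw [hf, taylor_mul]
  have h3 : taylor xi (∑ s ∈ range κ, C (c s) * (X - C xi)^s)
      = ∑ s ∈ range κ, C (c s) * X ^ s := by
    rw [map_sum]
    refine Finset.sum_congr rfl fun s _ => ?_
    simp [taylor_apply, sub_comp]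
  rw [h3, coeff_mul, Finset.Nat.sum_antidiagonal_eq_sum_range_succ_mk]
  refine Finset.sum_congr rfl fun m hm => ?_
  rw [taylor_coeff]
  congr 1
  have hlt : r - m < κ := lt_of_le_of_lt (Nat.sub_le _ _) hr
  rw [finset_sum_coeff]
  rw [Finset.sum_eq_single (r - m)]
  · simp
  · intro s _ hs; simp [coeff_C_mul, coeff_X_pow, Ne.symm hs]
  · intro h; exact absurd (Finset.mem_range.mpr hlt) h
lemma auxR (xi : ℂ) (n r : ℕ) (Q : ℂ[X]) (h : Q.natDegree ≤ n) (d : ℕ → ℂ) :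
    ∑ m ∈ range (n+1), eval xi (hasseDeriv m Q) * (if m ≤ r then d (r - m) else 0)
      = ∑ m ∈ range (r+1), eval xi (hasseDeriv m Q) * d (r - m) := by
  have h1 : ∑ m ∈ range (n+1), eval xi (hasseDeriv m Q) * (if m ≤ r then d (r-m) else 0)
      = ∑ m ∈ range (max n r + 1), eval xi (hasseDeriv m Q) * (if m ≤ r then d (r-m) else 0) := by
    apply Finset.sum_subset (Finset.range_subset_range.mpr (by omega))
    intro x hx hnx
    rw [hasseDeriv_eq_zero_of_lt_natDegree Q x (by simp at hnx; omega)]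
    simp
  have h2 : ∑ m ∈ range (max n r + 1), eval xi (hasseDeriv m Q) * (if m ≤ r then d (r-m) else 0)
      = ∑ m ∈ range (r+1), eval xi (hasseDeriv m Q) * d (r-m) := by
    rw [← Finset.sum_subset (Finset.range_subset_range.mpr (show r+1 ≤ max n r+1 by omega))
      (fun x _ hx => by rw [if_neg (by simp at hx; omega), mul_zero])]
    exact Finset.sum_congr rfl fun m hm => by rw [if_pos (by simp at hm; omega)]
  rw [h1, h2]


/-- If `{v_0, …, v_{κ-1}}` is a Jordan chain for `A ∈ ℂ^{p×p}` at the eigenvalue `x_i` and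
`v_j(x) = ∑_{r<κ} v_r (x - x_i)^r` is the associated root polynomial, then for every matrix
polynomial `P` and every `0 ≤ r ≤ κ - 1`,
`(1/r!) dʳ/dxʳ [P(x) v_j(x)] |_{x = x_i} = P(A) v_r`, where `P(A)` is the right evaluation. -/
theorem derivative_P_root_polynomial_eq_rightEval_mulVec
    (p : ℕ) (A : Matrix (Fin p) (Fin p) ℂ) (xi : ℂ) (κ : ℕ) (hκ : 0 < κ)
    (v : ℕ → Fin p → ℂ) (hv0 : v 0 ≠ 0)
    (h0 : (xi • (1 : Matrix (Fin p) (Fin p) ℂ) - A).mulVec (v 0) = 0)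
    (hchain : ∀ r, 0 < r → r < κ →
      (xi • (1 : Matrix (Fin p) (Fin p) ℂ) - A).mulVec (v r) = -(v (r - 1)))
    (n : ℕ) (P : Matrix (Fin p) (Fin p) (Polynomial ℂ))
    (hdeg : ∀ a b, (P a b).natDegree ≤ n) :
    ∀ r < κ, (fun a => ((r.factorial : ℂ))⁻¹ *
        Polynomial.eval xi (Polynomial.derivative^[r]
          ((P.mulVec (fun b => ∑ s ∈ Finset.range κ,
            Polynomial.C (v s b) * (Polynomial.X - Polynomial.C xi) ^ s)) a)))
      = (∑ k ∈ Finset.range (n + 1),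
          (P.map (fun w => w.coeff k)) * A ^ k).mulVec (v r) := by
  intro r hr
  funext a
  have hg : (P.mulVec (fun b => ∑ s ∈ Finset.range κ, C (v s b) * (X - C xi) ^ s)) a
      = ∑ b, P a b * ∑ s ∈ Finset.range κ, C (v s b) * (X - C xi) ^ s := rfl
  rw [hg, iterate_derivative_sum, eval_finset_sum, Finset.mul_sum]
  rw [Finset.sum_congr rfl (fun b _ => auxL xi κ r hr (P a b) (fun s => v s b))]
  have hAk : ∀ k ∈ range (n+1), (A^k).mulVec (v r)
      = ∑ m ∈ range (n+1), ((k.choose m : ℂ) * xi^(k-m)) • (if m ≤ r then v (r-m) else 0) := by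
    intro k hk
    rw [auxA p A xi κ v h0 hchain k r hr]
    apply Finset.sum_subset (Finset.range_subset_range.mpr (by simp at hk; omega))
    intro x _ hx
    have hc : k.choose x = 0 := Nat.choose_eq_zero_of_lt (by simp at hx; omega)
    simp [hc]
  rw [sum_mulVec, Finset.sum_apply]
  have hterm : ∀ k ∈ range (n+1), ((P.map (fun w => w.coeff k) * A ^ k).mulVec (v r)) a
      = ∑ b, ∑ m ∈ range (n+1), ((k.choose m : ℂ) * xi^(k-m)) * ((P a b).coeff k) *
          (if m ≤ r then v (r-m) b else 0) := by
    intro k hk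
    rw [← Matrix.mulVec_mulVec, hAk k hk]
    simp only [Matrix.mulVec, dotProduct, Matrix.map_apply, Finset.sum_apply,
      Pi.smul_apply, smul_eq_mul]
    refine Finset.sum_congr rfl fun b _ => ?_
    rw [Finset.mul_sum]
    refine Finset.sum_congr rfl fun m _ => ?_
    have hb : (if m ≤ r then v (r - m) else 0) b = (if m ≤ r then v (r-m) b else 0) := by
      split_ifs <;> rfl
    rw [hb]
    ring
  have hR : ∑ k ∈ range (n+1), ((P.map (fun w => w.coeff k) * A ^ k).mulVec (v r)) a
      = ∑ b, ∑ m ∈ range (r+1), eval xi (hasseDeriv m (P a b)) * v (r-m) b := by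
    rw [Finset.sum_congr rfl hterm, Finset.sum_comm]
    refine Finset.sum_congr rfl fun b _ => ?_
    rw [Finset.sum_comm]
    rw [← auxR xi n r (P a b) (hdeg a b) (fun s => v s b)]
    refine Finset.sum_congr rfl fun m hm => ?_
    rw [← Finset.sum_mul, aux1 (P a b) n (hdeg a b) m xi]
    congr 1
    exact Finset.sum_congr rfl fun k _ => by ring
  rw [hR]
end

section
/- Assume both moment matrices M and M̂ = W(Λ)M admit block Gaussian factorizations M = S_1^{-1} H S_2^{-⊤} and M̂ = Ŝ_1^{-1} Ĥ Ŝ_2^{-⊤}, with S_i, Ŝ_i block lower unitriangular and H, Ĥ block diagonal. Define the resolvents ω^{[1]} := Ŝ_1 W(Λ) S_1^{-1} and ω^{[2]} := (S_2 Ŝ_2^{-1})^⊤. Then Ĥ ω^{[2]} = ω^{[1]} H. -/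
open Matrix

/-- For semi-infinite block matrices with Gaussian factorizations `M = S₁⁻¹ H S₂⁻ᵀ` and
`M̂ = W(Λ)M = Ŝ₁⁻¹ Ĥ Ŝ₂⁻ᵀ` (encoded as `S₁ M S₂ᵀ = H`, `Ŝ₁ M̂ Ŝ₂ᵀ = Ĥ` with block lower
unitriangular `S`'s and block diagonal `H`'s), the resolvents `ω⁽¹⁾ = Ŝ₁ W(Λ) S₁⁻¹`
(characterized by `ω⁽¹⁾ S₁ = Ŝ₁ W(Λ)` together with its bandedness) and
`ω⁽²⁾ = (S₂ Ŝ₂⁻¹)ᵀ` (characterized by `(ω⁽²⁾)ᵀ Ŝ₂ = S₂` together with upper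
unitriangularity) satisfy `Ĥ ω⁽²⁾ = ω⁽¹⁾ H`. -/
theorem resolvent_relation
    (p N : ℕ)
    (A : ℕ → Matrix (Fin p) (Fin p) ℝ)  -- coefficients of `W`, `W(x) = ∑_{r ≤ N} A_r x^r`
    (M S1 S2 Sh1 Sh2 : ℕ → ℕ → Matrix (Fin p) (Fin p) ℝ)
    (Hd Hh : ℕ → Matrix (Fin p) (Fin p) ℝ)
    (hS1d : ∀ i, S1 i i = 1) (hS1u : ∀ i j, i < j → S1 i j = 0)
    (hS2d : ∀ i, S2 i i = 1) (hS2u : ∀ i j, i < j → S2 i j = 0)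
    (hSh1d : ∀ i, Sh1 i i = 1) (hSh1u : ∀ i j, i < j → Sh1 i j = 0)
    (hSh2d : ∀ i, Sh2 i i = 1) (hSh2u : ∀ i j, i < j → Sh2 i j = 0)
    -- Gaussian factorization of `M`: `S₁ M S₂ᵀ = H`
    (hfac : ∀ i j, ∑ k ∈ Finset.range (i + 1), ∑ l ∈ Finset.range (j + 1),
        S1 i k * M k l * (S2 j l)ᵀ = if i = j then Hd i else 0)
    -- Gaussian factorization of `M̂ = W(Λ) M`: `Ŝ₁ W(Λ) M Ŝ₂ᵀ = Ĥ`
    (hfach : ∀ i j, ∑ k ∈ Finset.range (i + 1), ∑ l ∈ Finset.range (j + 1),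
        Sh1 i k * (∑ r ∈ Finset.range (N + 1), A r * M (k + r) l) * (Sh2 j l)ᵀ
          = if i = j then Hh i else 0)
    (ω1 ω2 : ℕ → ℕ → Matrix (Fin p) (Fin p) ℝ)
    -- `ω⁽¹⁾` is banded: vanishes above the `N`-th block superdiagonal
    (hω1band : ∀ i j, i + N < j → ω1 i j = 0)
    -- `ω⁽¹⁾ S₁ = Ŝ₁ W(Λ)`
    (hω1def : ∀ i j, ∑ k ∈ Finset.range (i + N + 1), ω1 i k * S1 k j
        = ∑ s ∈ Finset.range (i + 1),
            Sh1 i s * (if s ≤ j ∧ j ≤ s + N then A (j - s) else 0))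
    -- `ω⁽²⁾` is block upper triangular
    (hω2upper : ∀ i j, j < i → ω2 i j = 0)
    -- `(ω⁽²⁾)ᵀ Ŝ₂ = S₂`
    (hω2def : ∀ i j, ∑ k ∈ Finset.range (i + 1), (ω2 k i)ᵀ * Sh2 k j = S2 i j) :
    ∀ i j, Hh i * ω2 i j = ω1 i j * Hd j := by
  intro i j
  -- the common value `(Ŝ₁ W(Λ) M S₂ᵀ)_{ij}`
  have key1 : Hh i * ω2 i j = ∑ m ∈ Finset.range (i + 1), ∑ l ∈ Finset.range (j + 1),
      Sh1 i m * (∑ r ∈ Finset.range (N + 1), A r * M (m + r) l) * (S2 j l)ᵀ := by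
    have hiK : i ∈ Finset.range (i + j + 1) := by
      simp only [Finset.mem_range]; omega
    have step0 : Hh i * ω2 i j
        = ∑ k ∈ Finset.range (i + j + 1), (if i = k then Hh i else 0) * ω2 k j := by
      rw [show (∑ k ∈ Finset.range (i + j + 1), (if i = k then Hh i else 0) * ω2 k j)
          = ∑ k ∈ Finset.range (i + j + 1), (if i = k then Hh i * ω2 k j else 0) from
          Finset.sum_congr rfl (fun k _ => by split <;> simp_all),
        Finset.sum_ite_eq, if_pos hiK]
    rw [step0]
    have step1 : ∀ k ∈ Finset.range (i + j + 1), (if i = k then Hh i else 0) * ω2 k j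
        = ∑ m ∈ Finset.range (i + 1), ∑ l ∈ Finset.range (i + j + 1),
            Sh1 i m * (∑ r ∈ Finset.range (N + 1), A r * M (m + r) l) * (Sh2 k l)ᵀ
              * ω2 k j := by
      intro k hk
      rw [← hfach i k, Finset.sum_mul]
      refine Finset.sum_congr rfl fun m _ => ?_
      rw [Finset.sum_mul]
      apply Finset.sum_subset
      · exact Finset.range_subset_range.2 (by simp only [Finset.mem_range] at hk; omega)
      · intro l _ hl'
        have hkl : k < l := by simp only [Finset.mem_range] at hl'; omega
        rw [hSh2u k l hkl]; simp
    rw [Finset.sum_congr rfl step1, Finset.sum_comm]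
    refine Finset.sum_congr rfl fun m _ => ?_
    rw [Finset.sum_comm]
    have e2 : ∀ l, ∑ k ∈ Finset.range (i + j + 1), (Sh2 k l)ᵀ * ω2 k j = (S2 j l)ᵀ := by
      intro l
      have h1 : (S2 j l)ᵀ = ∑ k ∈ Finset.range (j + 1), (Sh2 k l)ᵀ * ω2 k j := by
        rw [← hω2def j l, Matrix.transpose_sum]
        exact Finset.sum_congr rfl fun k _ => by rw [Matrix.transpose_mul,
          Matrix.transpose_transpose]
      rw [h1]
      symm
      apply Finset.sum_subset
      · exact Finset.range_subset_range.2 (by omega)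
      · intro k _ hk'
        have hjk : j < k := by simp only [Finset.mem_range] at hk'; omega
        rw [hω2upper k j hjk, mul_zero]
    have e3 : ∀ l ∈ Finset.range (i + j + 1),
        ∑ k ∈ Finset.range (i + j + 1),
          Sh1 i m * (∑ r ∈ Finset.range (N + 1), A r * M (m + r) l) * (Sh2 k l)ᵀ * ω2 k j
        = Sh1 i m * (∑ r ∈ Finset.range (N + 1), A r * M (m + r) l) * (S2 j l)ᵀ := by
      intro l _
      rw [Finset.sum_congr rfl fun k _ =>
        mul_assoc (Sh1 i m * (∑ r ∈ Finset.range (N + 1), A r * M (m + r) l))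
          ((Sh2 k l)ᵀ) (ω2 k j)]
      rw [← Finset.mul_sum, e2 l]
    rw [Finset.sum_congr rfl e3]
    symm
    apply Finset.sum_subset
    · exact Finset.range_subset_range.2 (by omega)
    · intro l _ hl'
      have hjl : j < l := by simp only [Finset.mem_range] at hl'; omega
      rw [hS2u j l hjl]; simp
  have key2 : ω1 i j * Hd j = ∑ m ∈ Finset.range (i + 1), ∑ l ∈ Finset.range (j + 1),
      Sh1 i m * (∑ r ∈ Finset.range (N + 1), A r * M (m + r) l) * (S2 j l)ᵀ := by
    have hjK : j ∈ Finset.range (i + j + N + 1) := by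
      simp only [Finset.mem_range]; omega
    have step0 : ω1 i j * Hd j
        = ∑ k ∈ Finset.range (i + j + N + 1), ω1 i k * (if k = j then Hd k else 0) := by
      rw [show (∑ k ∈ Finset.range (i + j + N + 1), ω1 i k * (if k = j then Hd k else 0))
          = ∑ k ∈ Finset.range (i + j + N + 1), (if k = j then ω1 i k * Hd k else 0) from
          Finset.sum_congr rfl (fun k _ => by split <;> simp_all),
        Finset.sum_ite_eq', if_pos hjK]
    rw [step0]
    have step1 : ∀ k ∈ Finset.range (i + j + N + 1), ω1 i k * (if k = j then Hd k else 0)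
        = ∑ m ∈ Finset.range (i + j + N + 1), ∑ l ∈ Finset.range (j + 1),
            (ω1 i k * S1 k m) * (M m l * (S2 j l)ᵀ) := by
      intro k hk
      rw [← hfac k j, Finset.mul_sum]
      rw [show (∑ m ∈ Finset.range (i + j + N + 1), ∑ l ∈ Finset.range (j + 1),
            (ω1 i k * S1 k m) * (M m l * (S2 j l)ᵀ))
          = ∑ m ∈ Finset.range (k + 1), ∑ l ∈ Finset.range (j + 1),
            (ω1 i k * S1 k m) * (M m l * (S2 j l)ᵀ) from ?_]
      · refine Finset.sum_congr rfl fun m _ => ?_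
        rw [Finset.mul_sum]
        refine Finset.sum_congr rfl fun l _ => ?_
        simp only [mul_assoc]
      · symm
        apply Finset.sum_subset
        · exact Finset.range_subset_range.2 (by simp only [Finset.mem_range] at hk; omega)
        · intro m _ hm'
          have hkm : k < m := by simp only [Finset.mem_range] at hm'; omega
          rw [hS1u k m hkm]; simp
    rw [Finset.sum_congr rfl step1, Finset.sum_comm]
    have step2 : ∀ m ∈ Finset.range (i + j + N + 1),
        ∑ k ∈ Finset.range (i + j + N + 1), ∑ l ∈ Finset.range (j + 1),
          (ω1 i k * S1 k m) * (M m l * (S2 j l)ᵀ)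
        = ∑ s ∈ Finset.range (i + 1), ∑ l ∈ Finset.range (j + 1),
            (Sh1 i s * (if s ≤ m ∧ m ≤ s + N then A (m - s) else 0))
              * (M m l * (S2 j l)ᵀ) := by
      intro m _
      rw [Finset.sum_comm]
      have e4 : ∀ l ∈ Finset.range (j + 1),
          ∑ k ∈ Finset.range (i + j + N + 1), (ω1 i k * S1 k m) * (M m l * (S2 j l)ᵀ)
          = ∑ s ∈ Finset.range (i + 1),
              (Sh1 i s * (if s ≤ m ∧ m ≤ s + N then A (m - s) else 0))
                * (M m l * (S2 j l)ᵀ) := by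
        intro l _
        rw [← Finset.sum_mul, ← Finset.sum_mul]
        congr 1
        rw [← hω1def i m]
        symm
        apply Finset.sum_subset
        · exact Finset.range_subset_range.2 (by omega)
        · intro k _ hk'
          have hik : i + N < k := by simp only [Finset.mem_range] at hk'; omega
          rw [hω1band i k hik]; simp
      rw [Finset.sum_congr rfl e4, Finset.sum_comm]
    rw [Finset.sum_congr rfl step2, Finset.sum_comm]
    refine Finset.sum_congr rfl fun s hs => ?_
    rw [Finset.sum_comm]
    refine Finset.sum_congr rfl fun l hl => ?_
    have hs' : s ≤ i := by simp only [Finset.mem_range] at hs; omega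
    have hinner : ∑ m ∈ Finset.range (i + j + N + 1),
        (if s ≤ m ∧ m ≤ s + N then A (m - s) else 0) * M m l
        = ∑ r ∈ Finset.range (N + 1), A r * M (s + r) l := by
      rw [show (∑ m ∈ Finset.range (i + j + N + 1),
            (if s ≤ m ∧ m ≤ s + N then A (m - s) else 0) * M m l)
          = ∑ m ∈ Finset.Ico s (s + N + 1),
            (if s ≤ m ∧ m ≤ s + N then A (m - s) else 0) * M m l from ?_]
      · rw [Finset.sum_Ico_eq_sum_range]
        rw [show s + N + 1 - s = N + 1 by omega]
        refine Finset.sum_congr rfl fun r hr => ?_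
        have hr' : r ≤ N := by simp only [Finset.mem_range] at hr; omega
        rw [if_pos ⟨by omega, by omega⟩, show s + r - s = r by omega]
      · symm
        apply Finset.sum_subset
        · intro m hm
          simp only [Finset.mem_Ico] at hm
          simp only [Finset.mem_range]; omega
        · intro m _ hm'
          simp only [Finset.mem_Ico] at hm'
          rw [if_neg (by omega)]; simp
    calc ∑ m ∈ Finset.range (i + j + N + 1),
          (Sh1 i s * (if s ≤ m ∧ m ≤ s + N then A (m - s) else 0))
            * (M m l * (S2 j l)ᵀ)
        = ∑ m ∈ Finset.range (i + j + N + 1),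
            Sh1 i s * (((if s ≤ m ∧ m ≤ s + N then A (m - s) else 0) * M m l)
              * (S2 j l)ᵀ) := by
          refine Finset.sum_congr rfl fun m _ => ?_
          simp only [mul_assoc]
      _ = Sh1 i s * ((∑ m ∈ Finset.range (i + j + N + 1),
            (if s ≤ m ∧ m ≤ s + N then A (m - s) else 0) * M m l) * (S2 j l)ᵀ) := by
          rw [← Finset.mul_sum, ← Finset.sum_mul]
      _ = Sh1 i s * (∑ r ∈ Finset.range (N + 1), A r * M (s + r) l) * (S2 j l)ᵀ := by
          rw [hinner, ← mul_assoc]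
  rw [key1, key2]
end

section
/- Under the assumptions of the previous statement with W monic of degree N, the resolvent ω^{[1]} = Ŝ_1 W(Λ) S_1^{-1} is a banded block upper triangular matrix: its (k,l) block vanishes for l < k and for l > k + N, the (k, k+N) block equals I_p, and the (k,k) block equals Ĥ_k H_k^{-1}. -/
open Matrix

/-- The resolvent `ω⁽¹⁾ = Ŝ₁ W(Λ) S₁⁻¹`, written explicitly with `T₁ = S₁⁻¹`. -/
def omega1 (p N : ℕ) (A : ℕ → Matrix (Fin p) (Fin p) ℝ)
    (Sh1 T1 : ℕ → ℕ → Matrix (Fin p) (Fin p) ℝ) : ℕ → ℕ → Matrix (Fin p) (Fin p) ℝ :=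
  fun i j => ∑ s ∈ Finset.range (i + 1), ∑ r ∈ Finset.range (N + 1),
    Sh1 i s * A r * T1 (s + r) j

namespace ResolventAux

lemma mul_unit_eq_zero {p : ℕ} {a b : Matrix (Fin p) (Fin p) ℝ} (hb : IsUnit b)
    (h : a * b = 0) : a = 0 := by
  obtain ⟨u, rfl⟩ := hb
  calc a = a * ↑u * ↑u⁻¹ := (Units.mul_inv_cancel_right a u).symm
    _ = 0 := by rw [h, zero_mul]

/-- Generic triangular-structure extraction lemma. -/
lemma tri {p : ℕ} (G S2 : ℕ → ℕ → Matrix (Fin p) (Fin p) ℝ)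
    (D : ℕ → Matrix (Fin p) (Fin p) ℝ)
    (hS2d : ∀ i, S2 i i = 1)
    (h : ∀ i j, ∑ l ∈ Finset.range (j + 1), G i l * (S2 j l)ᵀ = if i = j then D i else 0) :
    ∀ j i, j ≤ i → G i j = if i = j then D i else 0 := by
  intro j
  induction j using Nat.strong_induction_on with
  | _ j IH =>
    intro i hji
    have h0 := h i j
    rw [Finset.sum_range_succ] at h0
    have hz : ∑ l ∈ Finset.range j, G i l * (S2 j l)ᵀ = 0 := by
      refine Finset.sum_eq_zero fun l hl => ?_
      rw [Finset.mem_range] at hl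
      rw [IH l hl i (le_trans hl.le hji), if_neg (by omega), zero_mul]
    rw [hz, zero_add, hS2d j, Matrix.transpose_one, mul_one] at h0
    exact h0

/-- Entries of a product of two flattened block matrices. -/
lemma blockMul {p n : ℕ} (F G : ℕ → ℕ → Matrix (Fin p) (Fin p) ℝ) (i j : Fin n) (x y : Fin p) :
    (Matrix.of (fun (a b : Fin n × Fin p) => F a.1 b.1 a.2 b.2) *
     Matrix.of (fun (a b : Fin n × Fin p) => G a.1 b.1 a.2 b.2)) (i, x) (j, y)
      = (∑ t ∈ Finset.range n, F i t * G t j) x y := by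
  rw [Matrix.mul_apply, Fintype.sum_prod_type, Matrix.sum_apply,
    ← Fin.sum_univ_eq_sum_range (fun t => (F i t * G t j) x y) n]
  refine Finset.sum_congr rfl fun t _ => ?_
  rw [Matrix.mul_apply]
  rfl

/-- A right inverse of a lower unitriangular block matrix is also a left inverse. -/
lemma left_inv (p : ℕ) (S1 T1 : ℕ → ℕ → Matrix (Fin p) (Fin p) ℝ)
    (hS1u : ∀ i j, i < j → S1 i j = 0) (hT1u : ∀ i j, i < j → T1 i j = 0)
    (hT1 : ∀ i j, ∑ k ∈ Finset.range (i + 1), S1 i k * T1 k j = if i = j then 1 else 0) :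
    ∀ m k, ∑ t ∈ Finset.range (m + 1), T1 m t * S1 t k = if m = k then 1 else 0 := by
  intro m k
  rcases lt_or_ge m k with h | h
  · rw [if_neg (by omega)]
    refine Finset.sum_eq_zero fun t ht => ?_
    rw [Finset.mem_range] at ht
    rw [hS1u t k (by omega), mul_zero]
  · set n := m + 1 with hn
    set BS : Matrix (Fin n × Fin p) (Fin n × Fin p) ℝ :=
      Matrix.of (fun (a b : Fin n × Fin p) => S1 a.1 b.1 a.2 b.2) with hBS
    set BT : Matrix (Fin n × Fin p) (Fin n × Fin p) ℝ :=
      Matrix.of (fun (a b : Fin n × Fin p) => T1 a.1 b.1 a.2 b.2) with hBT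
    have hmul : BS * BT = 1 := by
      ext ⟨i, x⟩ ⟨j, y⟩
      rw [hBS, hBT, blockMul S1 T1 i j x y]
      have hsub : Finset.range ((i : ℕ) + 1) ⊆ Finset.range n := by
        intro a ha
        rw [Finset.mem_range] at *
        have := i.isLt
        omega
      have h1 : ∑ t ∈ Finset.range ((i : ℕ) + 1), S1 i t * T1 t j
          = ∑ t ∈ Finset.range n, S1 i t * T1 t j := by
        refine Finset.sum_subset hsub fun t _ ht => ?_
        rw [Finset.mem_range] at ht
        rw [hS1u i t (by omega), zero_mul]
      rw [← h1, hT1]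
      by_cases hij : (i : ℕ) = (j : ℕ)
      · have hij' : i = j := Fin.ext hij
        subst hij'
        simp [Matrix.one_apply, Prod.ext_iff]
      · have hij' : i ≠ j := fun hc => hij (by rw [hc])
        simp [Matrix.one_apply, Prod.ext_iff, hij, hij']
    have hmul2 : BT * BS = 1 := mul_eq_one_comm.mp hmul
    have hmlt : m < n := by omega
    have hklt : k < n := by omega
    ext x y
    have hval := congrFun (congrFun hmul2 (⟨m, hmlt⟩, x)) (⟨k, hklt⟩, y)
    rw [hBT, hBS, blockMul T1 S1 ⟨m, hmlt⟩ ⟨k, hklt⟩ x y] at hval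
    rw [Matrix.sum_apply] at hval
    have hgoal : (∑ t ∈ Finset.range (m + 1), T1 m t * S1 t k) x y
        = ∑ t ∈ Finset.range n, (T1 m t * S1 t k) x y := by
      rw [Matrix.sum_apply]
    rw [hgoal, hval]
    by_cases hmk : m = k
    · subst hmk
      simp [Matrix.one_apply, Prod.ext_iff]
    · simp [Matrix.one_apply, Prod.ext_iff, Fin.ext_iff, hmk]

/-- `T₁ (S₁ M) = M` row-wise. -/
lemma T1C {p : ℕ} (M S1 T1 : ℕ → ℕ → Matrix (Fin p) (Fin p) ℝ)
    (hS1u : ∀ i j, i < j → S1 i j = 0) (hT1u : ∀ i j, i < j → T1 i j = 0)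
    (hT1 : ∀ i j, ∑ k ∈ Finset.range (i + 1), S1 i k * T1 k j = if i = j then 1 else 0)
    (m j n' : ℕ) (hm : m ≤ n') :
    ∑ t ∈ Finset.range (n' + 1), T1 m t * ∑ k ∈ Finset.range (t + 1), S1 t k * M k j
      = M m j := by
  have step1 : ∀ t ∈ Finset.range (n' + 1),
      T1 m t * ∑ k ∈ Finset.range (t + 1), S1 t k * M k j
        = ∑ k ∈ Finset.range (n' + 1), T1 m t * (S1 t k * M k j) := by
    intro t ht
    rw [Finset.mem_range] at ht
    rw [Finset.mul_sum]
    refine Finset.sum_subset (fun a ha => ?_) (fun k hk hk2 => ?_)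
    · rw [Finset.mem_range] at *
      omega
    · rw [Finset.mem_range] at hk hk2
      rw [hS1u t k (by omega), zero_mul, mul_zero]
  rw [Finset.sum_congr rfl step1, Finset.sum_comm]
  have step2 : ∀ k ∈ Finset.range (n' + 1),
      ∑ t ∈ Finset.range (n' + 1), T1 m t * (S1 t k * M k j)
        = (if m = k then (1 : Matrix (Fin p) (Fin p) ℝ) else 0) * M k j := by
    intro k hk
    have e1 : ∑ t ∈ Finset.range (m + 1), T1 m t * S1 t k
        = ∑ t ∈ Finset.range (n' + 1), T1 m t * S1 t k := by
      refine Finset.sum_subset (fun a ha => ?_) (fun t ht ht2 => ?_)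
      · rw [Finset.mem_range] at *
        omega
      · rw [Finset.mem_range] at ht ht2
        rw [hT1u m t (by omega), zero_mul]
    calc ∑ t ∈ Finset.range (n' + 1), T1 m t * (S1 t k * M k j)
        = (∑ t ∈ Finset.range (n' + 1), T1 m t * S1 t k) * M k j := by
          rw [Finset.sum_mul]
          exact Finset.sum_congr rfl fun t _ => (mul_assoc _ _ _).symm
      _ = (if m = k then (1 : Matrix (Fin p) (Fin p) ℝ) else 0) * M k j := by
          rw [← e1, left_inv p S1 T1 hS1u hT1u hT1]
  rw [Finset.sum_congr rfl step2]
  simp only [ite_mul, one_mul, zero_mul]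
  rw [Finset.sum_ite_eq, if_pos (Finset.mem_range.mpr (by omega))]

end ResolventAux

/-- For a monic degree-`N` matrix polynomial perturbation, the resolvent
`ω⁽¹⁾ = Ŝ₁ W(Λ) S₁⁻¹` is a banded block upper triangular matrix: its `(i,j)` block vanishes
for `j < i` and for `j > i + N`, its `(i, i+N)` block is `I_p`, and its diagonal block is
`ω⁽¹⁾_{ii} = Ĥ_i H_i⁻¹`. -/
theorem resolvent_band_structure
    (p N : ℕ)
    (A : ℕ → Matrix (Fin p) (Fin p) ℝ) (hmonic : A N = 1)
    (M S1 S2 Sh1 Sh2 T1 : ℕ → ℕ → Matrix (Fin p) (Fin p) ℝ)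
    (Hd Hh : ℕ → Matrix (Fin p) (Fin p) ℝ)
    (hS1d : ∀ i, S1 i i = 1) (hS1u : ∀ i j, i < j → S1 i j = 0)
    (hS2d : ∀ i, S2 i i = 1) (hS2u : ∀ i j, i < j → S2 i j = 0)
    (hSh1d : ∀ i, Sh1 i i = 1) (hSh1u : ∀ i j, i < j → Sh1 i j = 0)
    (hSh2d : ∀ i, Sh2 i i = 1) (hSh2u : ∀ i j, i < j → Sh2 i j = 0)
    (hT1d : ∀ i, T1 i i = 1) (hT1u : ∀ i j, i < j → T1 i j = 0)
    -- `T₁` is the inverse of `S₁`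
    (hT1 : ∀ i j, ∑ k ∈ Finset.range (i + 1), S1 i k * T1 k j = if i = j then 1 else 0)
    -- Gaussian factorization of `M`: `S₁ M S₂ᵀ = H`
    (hfac : ∀ i j, ∑ k ∈ Finset.range (i + 1), ∑ l ∈ Finset.range (j + 1),
        S1 i k * M k l * (S2 j l)ᵀ = if i = j then Hd i else 0)
    -- Gaussian factorization of `M̂ = W(Λ) M`: `Ŝ₁ W(Λ) M Ŝ₂ᵀ = Ĥ`
    (hfach : ∀ i j, ∑ k ∈ Finset.range (i + 1), ∑ l ∈ Finset.range (j + 1),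
        Sh1 i k * (∑ r ∈ Finset.range (N + 1), A r * M (k + r) l) * (Sh2 j l)ᵀ
          = if i = j then Hh i else 0)
    (hHu : ∀ i, IsUnit (Hd i)) :
    (∀ i j, j < i ∨ i + N < j → omega1 p N A Sh1 T1 i j = 0) ∧
    (∀ i, omega1 p N A Sh1 T1 i (i + N) = 1) ∧
    (∀ i, omega1 p N A Sh1 T1 i i = Hh i * Ring.inverse (Hd i)) := by
  classical
  -- single-sum form of the factorization of `M`
  have hfac' : ∀ i j, ∑ l ∈ Finset.range (j + 1),
      (∑ k ∈ Finset.range (i + 1), S1 i k * M k l) * (S2 j l)ᵀ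
        = if i = j then Hd i else 0 := by
    intro i j
    rw [← hfac i j, Finset.sum_comm]
    refine Finset.sum_congr rfl fun l _ => ?_
    rw [Finset.sum_mul]
  have hfach' : ∀ i j, ∑ l ∈ Finset.range (j + 1),
      (∑ k ∈ Finset.range (i + 1),
        Sh1 i k * ∑ r ∈ Finset.range (N + 1), A r * M (k + r) l) * (Sh2 j l)ᵀ
        = if i = j then Hh i else 0 := by
    intro i j
    rw [← hfach i j, Finset.sum_comm]
    refine Finset.sum_congr rfl fun l _ => ?_
    rw [Finset.sum_mul]
  have CL := ResolventAux.tri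
    (fun i l => ∑ k ∈ Finset.range (i + 1), S1 i k * M k l) S2 Hd hS2d hfac'
  have BL := ResolventAux.tri
    (fun i l => ∑ k ∈ Finset.range (i + 1),
      Sh1 i k * ∑ r ∈ Finset.range (N + 1), A r * M (k + r) l) Sh2 Hh hSh2d hfach'
  have Czero : ∀ t j, j < t → (∑ k ∈ Finset.range (t + 1), S1 t k * M k j) = 0 := by
    intro t j h
    have h2 := CL j t h.le
    rw [if_neg (by omega)] at h2
    exact h2
  have Cdiag : ∀ t, (∑ k ∈ Finset.range (t + 1), S1 t k * M k t) = Hd t := by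
    intro t
    have h2 := CL t t le_rfl
    rwa [if_pos rfl] at h2
  -- the key identity `ω⁽¹⁾ (S₁ M) = Ŝ₁ W(Λ) M`
  have key : ∀ i j,
      ∑ t ∈ Finset.range (i + N + 1),
        omega1 p N A Sh1 T1 i t * (∑ k ∈ Finset.range (t + 1), S1 t k * M k j)
      = ∑ s ∈ Finset.range (i + 1), Sh1 i s * ∑ r ∈ Finset.range (N + 1),
          A r * M (s + r) j := by
    intro i j
    simp only [omega1]
    simp only [Finset.sum_mul, mul_assoc]
    rw [Finset.sum_comm]
    refine Finset.sum_congr rfl fun s hs => ?_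
    rw [Finset.sum_comm, Finset.mul_sum]
    refine Finset.sum_congr rfl fun r hr => ?_
    rw [Finset.mem_range] at hs hr
    rw [← Finset.mul_sum, ← Finset.mul_sum,
      ResolventAux.T1C M S1 T1 hS1u hT1u hT1 (s + r) j (i + N) (by omega)]
  -- vanishing above the band
  have upper : ∀ i j, i + N < j → omega1 p N A Sh1 T1 i j = 0 := by
    intro i j h
    unfold omega1
    refine Finset.sum_eq_zero fun s hs => Finset.sum_eq_zero fun r hr => ?_
    rw [Finset.mem_range] at hs hr
    rw [hT1u (s + r) j (by omega), mul_zero]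
  -- vanishing below the diagonal
  have lower : ∀ j i, j < i → omega1 p N A Sh1 T1 i j = 0 := by
    intro j
    induction j using Nat.strong_induction_on with
    | _ j IH =>
      intro i hij
      have hk := key i j
      have hBz : (∑ s ∈ Finset.range (i + 1), Sh1 i s *
          ∑ r ∈ Finset.range (N + 1), A r * M (s + r) j) = 0 := by
        have h2 := BL j i hij.le
        rw [if_neg (by omega)] at h2
        exact h2
      rw [hBz] at hk
      have h0 : ∀ t ∈ Finset.range (i + N + 1), t ≠ j →
          omega1 p N A Sh1 T1 i t * (∑ k ∈ Finset.range (t + 1), S1 t k * M k j) = 0 := by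
        intro t ht htj
        rcases lt_or_gt_of_ne htj with h1 | h1
        · rw [IH t h1 i (by omega), zero_mul]
        · rw [Czero t j h1, mul_zero]
      rw [Finset.sum_eq_single j h0
        (fun hj => absurd (Finset.mem_range.mpr (by omega)) hj), Cdiag j] at hk
      exact ResolventAux.mul_unit_eq_zero (hHu j) hk
  -- the leading band block is the identity
  have band : ∀ i, omega1 p N A Sh1 T1 i (i + N) = 1 := by
    intro i
    unfold omega1
    have h0 : ∀ s ∈ Finset.range (i + 1), s ≠ i →
        (∑ r ∈ Finset.range (N + 1), Sh1 i s * A r * T1 (s + r) (i + N)) = 0 := by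
      intro s hs hsi
      rw [Finset.mem_range] at hs
      refine Finset.sum_eq_zero fun r hr => ?_
      rw [Finset.mem_range] at hr
      rw [hT1u (s + r) (i + N) (by omega), mul_zero]
    rw [Finset.sum_eq_single i h0
      (fun hi => absurd (Finset.mem_range.mpr (by omega)) hi)]
    have h1 : ∀ r ∈ Finset.range (N + 1), r ≠ N →
        Sh1 i i * A r * T1 (i + r) (i + N) = 0 := by
      intro r hr hrN
      rw [Finset.mem_range] at hr
      rw [hT1u (i + r) (i + N) (by omega), mul_zero]
    rw [Finset.sum_eq_single N h1
      (fun hN => absurd (Finset.mem_range.mpr (by omega)) hN)]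
    rw [hSh1d i, hmonic, hT1d, one_mul, one_mul]
  -- the diagonal block
  have diag : ∀ i, omega1 p N A Sh1 T1 i i = Hh i * Ring.inverse (Hd i) := by
    intro i
    have hk := key i i
    have hBd : (∑ s ∈ Finset.range (i + 1), Sh1 i s *
        ∑ r ∈ Finset.range (N + 1), A r * M (s + r) i) = Hh i := by
      have h2 := BL i i le_rfl
      rwa [if_pos rfl] at h2
    rw [hBd] at hk
    have h0 : ∀ t ∈ Finset.range (i + N + 1), t ≠ i →
        omega1 p N A Sh1 T1 i t * (∑ k ∈ Finset.range (t + 1), S1 t k * M k i) = 0 := by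
      intro t ht hti
      rcases lt_or_gt_of_ne hti with h1 | h1
      · rw [lower t i h1, zero_mul]
      · rw [Czero t i h1, mul_zero]
    rw [Finset.sum_eq_single i h0
      (fun hi => absurd (Finset.mem_range.mpr (by omega)) hi), Cdiag i] at hk
    obtain ⟨u, hu⟩ := hHu i
    rw [← hu, Ring.inverse_unit]
    rw [← hu] at hk
    rw [← hk, Units.mul_inv_cancel_right]
  exact ⟨fun i j h => h.elim (lower j i) (upper i j), band, diag⟩
end

section
/- Degree-one Christoffel formula: let W(x) = I_p x − A, let {P_n^{[1]}} be the monic bi-orthogonal polynomials of the matrix measure dμ with ⟨P_n^{[1]},P_m^{[2]}⟩ = δ_{nm}H_n, and suppose det P_n^{[1]}(A) ≠ 0 for all n, where P(A) denotes right evaluation. Then the monic bi-orthogonal polynomials of the perturbed measure (I_p x − A)dμ(x) satisfy P̂_n^{[1]}(x)(I_p x − A) = P_{n+1}^{[1]}(x) − P_{n+1}^{[1]}(A)[P_n^{[1]}(A)]^{-1} P_n^{[1]}(x), and the perturbed norms are Ĥ_n = −P_{n+1}^{[1]}(A)[P_n^{[1]}(A)]^{-1} H_n. -/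
open Polynomial Matrix

/-- The sesquilinear pairing `⟨P,Q⟩ = ∑_{k,l} P_k m_{k+l} Q_lᵀ` associated with a block
Hankel moment sequence `m`. -/
noncomputable def matPair (p : ℕ) (m : ℕ → Matrix (Fin p) (Fin p) ℝ)
    (P Q : Polynomial (Matrix (Fin p) (Fin p) ℝ)) : Matrix (Fin p) (Fin p) ℝ :=
  ∑ k ∈ Finset.range (P.natDegree + 1), ∑ l ∈ Finset.range (Q.natDegree + 1),
    P.coeff k * m (k + l) * (Q.coeff l)ᵀ

/-- The right evaluation `P(A) = ∑_k P_k A^k` of a matrix polynomial at a matrix. -/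
noncomputable def rightEval (p : ℕ) (P : Polynomial (Matrix (Fin p) (Fin p) ℝ))
    (A : Matrix (Fin p) (Fin p) ℝ) : Matrix (Fin p) (Fin p) ℝ :=
  ∑ k ∈ Finset.range (P.natDegree + 1), P.coeff k * A ^ k

namespace Christoffel

variable {p : ℕ}

lemma matPair_eq (m : ℕ → Matrix (Fin p) (Fin p) ℝ)
    (P Q : Polynomial (Matrix (Fin p) (Fin p) ℝ)) {N M : ℕ}
    (hN : P.natDegree < N) (hM : Q.natDegree < M) :
    matPair p m P Q
      = ∑ k ∈ Finset.range N, ∑ l ∈ Finset.range M,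
          P.coeff k * m (k + l) * (Q.coeff l)ᵀ := by
  have h1 : ∀ k, (∑ l ∈ Finset.range (Q.natDegree + 1),
        P.coeff k * m (k + l) * (Q.coeff l)ᵀ)
      = ∑ l ∈ Finset.range M, P.coeff k * m (k + l) * (Q.coeff l)ᵀ := by
    intro k
    refine Finset.sum_subset (Finset.range_subset_range.2 hM) ?_
    intro l _ hl
    simp only [Finset.mem_range] at hl
    rw [Polynomial.coeff_eq_zero_of_natDegree_lt (p := Q) (n := l) (by omega)]
    simp
  unfold matPair
  simp only [h1]
  refine Finset.sum_subset (Finset.range_subset_range.2 hN) ?_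
  intro k _ hk
  simp only [Finset.mem_range] at hk
  rw [Polynomial.coeff_eq_zero_of_natDegree_lt (by omega)]
  simp

lemma rightEval_eq (P : Polynomial (Matrix (Fin p) (Fin p) ℝ))
    (A : Matrix (Fin p) (Fin p) ℝ) {N : ℕ} (hN : P.natDegree < N) :
    rightEval p P A = ∑ k ∈ Finset.range N, P.coeff k * A ^ k := by
  unfold rightEval
  refine Finset.sum_subset (Finset.range_subset_range.2 hN) ?_
  intro k _ hk
  simp only [Finset.mem_range] at hk
  rw [Polynomial.coeff_eq_zero_of_natDegree_lt (by omega)]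
  simp

lemma matPair_smul_left (m : ℕ → Matrix (Fin p) (Fin p) ℝ)
    (B : Matrix (Fin p) (Fin p) ℝ) (P Q : Polynomial (Matrix (Fin p) (Fin p) ℝ)) :
    matPair p m (Polynomial.C B * P) Q = B * matPair p m P Q := by
  rw [matPair_eq m _ Q (N := P.natDegree + 1) (M := Q.natDegree + 1)
      (Nat.lt_succ_of_le (Polynomial.natDegree_C_mul_le B P)) (Nat.lt_succ_self _)]
  unfold matPair
  simp only [Polynomial.coeff_C_mul, Finset.mul_sum, Matrix.mul_assoc]

lemma matPair_smul_right (m : ℕ → Matrix (Fin p) (Fin p) ℝ)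
    (B : Matrix (Fin p) (Fin p) ℝ) (P Q : Polynomial (Matrix (Fin p) (Fin p) ℝ)) :
    matPair p m P (Polynomial.C B * Q) = matPair p m P Q * Bᵀ := by
  rw [matPair_eq m P _ (N := P.natDegree + 1) (M := Q.natDegree + 1)
      (Nat.lt_succ_self _) (Nat.lt_succ_of_le (Polynomial.natDegree_C_mul_le B Q))]
  unfold matPair
  simp only [Polynomial.coeff_C_mul, Matrix.transpose_mul, Finset.sum_mul, Matrix.mul_assoc]

lemma matPair_add_left (m : ℕ → Matrix (Fin p) (Fin p) ℝ)
    (P P' Q : Polynomial (Matrix (Fin p) (Fin p) ℝ)) :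
    matPair p m (P + P') Q = matPair p m P Q + matPair p m P' Q := by
  set N := max P.natDegree P'.natDegree + 1 with hNdef
  rw [matPair_eq m _ Q (N := N) (M := Q.natDegree + 1)
      (Nat.lt_succ_of_le ((Polynomial.natDegree_add_le _ _))) (Nat.lt_succ_self _),
    matPair_eq m P Q (N := N) (M := Q.natDegree + 1)
      (by omega) (Nat.lt_succ_self _),
    matPair_eq m P' Q (N := N) (M := Q.natDegree + 1)
      (by omega) (Nat.lt_succ_self _)]
  rw [← Finset.sum_add_distrib]
  refine Finset.sum_congr rfl fun k _ => ?_
  rw [← Finset.sum_add_distrib]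
  refine Finset.sum_congr rfl fun l _ => ?_
  simp [Polynomial.coeff_add, add_mul]

lemma matPair_sub_left (m : ℕ → Matrix (Fin p) (Fin p) ℝ)
    (P P' Q : Polynomial (Matrix (Fin p) (Fin p) ℝ)) :
    matPair p m (P - P') Q = matPair p m P Q - matPair p m P' Q := by
  set N := max P.natDegree P'.natDegree + 1 with hNdef
  rw [matPair_eq m _ Q (N := N) (M := Q.natDegree + 1)
      (Nat.lt_succ_of_le ((Polynomial.natDegree_sub_le _ _))) (Nat.lt_succ_self _),
    matPair_eq m P Q (N := N) (M := Q.natDegree + 1)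
      (by omega) (Nat.lt_succ_self _),
    matPair_eq m P' Q (N := N) (M := Q.natDegree + 1)
      (by omega) (Nat.lt_succ_self _)]
  rw [← Finset.sum_sub_distrib]
  refine Finset.sum_congr rfl fun k _ => ?_
  rw [← Finset.sum_sub_distrib]
  refine Finset.sum_congr rfl fun l _ => ?_
  simp [Polynomial.coeff_sub, sub_mul]

lemma matPair_zero_left (m : ℕ → Matrix (Fin p) (Fin p) ℝ)
    (Q : Polynomial (Matrix (Fin p) (Fin p) ℝ)) :
    matPair p m 0 Q = 0 := by
  unfold matPair
  simp

lemma matPair_zero_right (m : ℕ → Matrix (Fin p) (Fin p) ℝ)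
    (P : Polynomial (Matrix (Fin p) (Fin p) ℝ)) :
    matPair p m P 0 = 0 := by
  unfold matPair
  simp

lemma matPair_add_right (m : ℕ → Matrix (Fin p) (Fin p) ℝ)
    (P Q Q' : Polynomial (Matrix (Fin p) (Fin p) ℝ)) :
    matPair p m P (Q + Q') = matPair p m P Q + matPair p m P Q' := by
  set M := max Q.natDegree Q'.natDegree + 1 with hMdef
  rw [matPair_eq m P _ (N := P.natDegree + 1) (M := M)
      (Nat.lt_succ_self _) (Nat.lt_succ_of_le (Polynomial.natDegree_add_le _ _)),
    matPair_eq m P Q (N := P.natDegree + 1) (M := M)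
      (Nat.lt_succ_self _) (by omega),
    matPair_eq m P Q' (N := P.natDegree + 1) (M := M)
      (Nat.lt_succ_self _) (by omega)]
  rw [← Finset.sum_add_distrib]
  refine Finset.sum_congr rfl fun k _ => ?_
  rw [← Finset.sum_add_distrib]
  refine Finset.sum_congr rfl fun l _ => ?_
  simp [Polynomial.coeff_add, Matrix.transpose_add, mul_add]

lemma matPair_sum_right {ι : Type*} (m : ℕ → Matrix (Fin p) (Fin p) ℝ)
    (P : Polynomial (Matrix (Fin p) (Fin p) ℝ)) (s : Finset ι)
    (Q : ι → Polynomial (Matrix (Fin p) (Fin p) ℝ)) :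
    matPair p m P (∑ j ∈ s, Q j) = ∑ j ∈ s, matPair p m P (Q j) := by
  classical
  induction s using Finset.induction_on with
  | empty => simpa using matPair_zero_right m P
  | insert _ _ h ih =>
      rw [Finset.sum_insert h, Finset.sum_insert h, matPair_add_right, ih]

lemma matPair_sum_left {ι : Type*} (m : ℕ → Matrix (Fin p) (Fin p) ℝ)
    (Q : Polynomial (Matrix (Fin p) (Fin p) ℝ)) (s : Finset ι)
    (P : ι → Polynomial (Matrix (Fin p) (Fin p) ℝ)) :
    matPair p m (∑ j ∈ s, P j) Q = ∑ j ∈ s, matPair p m (P j) Q := by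
  classical
  induction s using Finset.induction_on with
  | empty => simpa using matPair_zero_left m Q
  | insert _ _ h ih =>
      rw [Finset.sum_insert h, Finset.sum_insert h, matPair_add_left, ih]

lemma matPair_mul_X_sub_C (m : ℕ → Matrix (Fin p) (Fin p) ℝ)
    (A : Matrix (Fin p) (Fin p) ℝ) (P Q : Polynomial (Matrix (Fin p) (Fin p) ℝ)) :
    matPair p m (P * (Polynomial.X - Polynomial.C A)) Q
      = matPair p (fun r => m (r + 1) - A * m r) P Q := by
  have hdeg : (P * (Polynomial.X - Polynomial.C A)).natDegree < P.natDegree + 2 := by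
    have h1 : (Polynomial.X - Polynomial.C A).natDegree ≤ 1 := by
      refine le_trans (Polynomial.natDegree_sub_le _ _) ?_
      simp [Polynomial.natDegree_X_le]
    have := Polynomial.natDegree_mul_le (p := P) (q := Polynomial.X - Polynomial.C A)
    omega
  rw [matPair_eq m _ Q (N := P.natDegree + 2) (M := Q.natDegree + 1)
      hdeg (Nat.lt_succ_self _)]
  unfold matPair
  simp only [mul_sub, Polynomial.coeff_sub, Polynomial.coeff_mul_C, sub_mul,
    Finset.sum_sub_distrib]
  congr 1
  · rw [Finset.sum_range_succ']
    simp only [Polynomial.coeff_mul_X, Polynomial.coeff_mul_X_zero, zero_mul,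
      Finset.sum_const_zero, add_zero]
    refine Finset.sum_congr rfl fun k _ => Finset.sum_congr rfl fun l _ => ?_
    have : k + 1 + l = k + l + 1 := by omega
    rw [this]
  · rw [Finset.sum_range_succ]
    rw [Polynomial.coeff_eq_zero_of_natDegree_lt (p := P) (Nat.lt_succ_self _)]
    simp only [zero_mul, Finset.sum_const_zero, add_zero]
    refine Finset.sum_congr rfl fun k _ => Finset.sum_congr rfl fun l _ => ?_
    simp only [Matrix.mul_assoc]

lemma rightEval_smul (B : Matrix (Fin p) (Fin p) ℝ)
    (P : Polynomial (Matrix (Fin p) (Fin p) ℝ)) (A : Matrix (Fin p) (Fin p) ℝ) :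
    rightEval p (Polynomial.C B * P) A = B * rightEval p P A := by
  rw [rightEval_eq _ A (N := P.natDegree + 1)
    (Nat.lt_succ_of_le (Polynomial.natDegree_C_mul_le B P))]
  unfold rightEval
  simp only [Polynomial.coeff_C_mul, Finset.mul_sum, Matrix.mul_assoc]

lemma rightEval_sub (P P' : Polynomial (Matrix (Fin p) (Fin p) ℝ))
    (A : Matrix (Fin p) (Fin p) ℝ) :
    rightEval p (P - P') A = rightEval p P A - rightEval p P' A := by
  set N := max P.natDegree P'.natDegree + 1 with hN
  rw [rightEval_eq _ A (N := N) (Nat.lt_succ_of_le (Polynomial.natDegree_sub_le _ _)),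
    rightEval_eq P A (N := N) (by omega), rightEval_eq P' A (N := N) (by omega)]
  rw [← Finset.sum_sub_distrib]
  exact Finset.sum_congr rfl fun k _ => by simp [Polynomial.coeff_sub, sub_mul]

lemma rightEval_mul_X_sub_C (P : Polynomial (Matrix (Fin p) (Fin p) ℝ))
    (A : Matrix (Fin p) (Fin p) ℝ) :
    rightEval p (P * (Polynomial.X - Polynomial.C A)) A = 0 := by
  have hdeg : (P * (Polynomial.X - Polynomial.C A)).natDegree < P.natDegree + 2 := by
    have h1 : (Polynomial.X - Polynomial.C A).natDegree ≤ 1 := by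
      refine le_trans (Polynomial.natDegree_sub_le _ _) ?_
      simp [Polynomial.natDegree_X_le]
    have := Polynomial.natDegree_mul_le (p := P) (q := Polynomial.X - Polynomial.C A)
    omega
  rw [rightEval_eq _ A (N := P.natDegree + 2) hdeg]
  simp only [mul_sub, Polynomial.coeff_sub, Polynomial.coeff_mul_C, sub_mul,
    Finset.sum_sub_distrib]
  rw [sub_eq_zero]
  conv_lhs => rw [Finset.sum_range_succ']
  conv_rhs => rw [Finset.sum_range_succ]
  rw [Polynomial.coeff_eq_zero_of_natDegree_lt (p := P) (Nat.lt_succ_self _)]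
  simp only [Polynomial.coeff_mul_X, Polynomial.coeff_mul_X_zero, zero_mul, add_zero]
  refine Finset.sum_congr rfl fun k _ => ?_
  simp [Matrix.mul_assoc, pow_succ']

lemma exists_expand (B : ℕ → Polynomial (Matrix (Fin p) (Fin p) ℝ))
    (hmon : ∀ k, (B k).Monic) (hdeg : ∀ k, (B k).natDegree = k) :
    ∀ (n : ℕ) (Q : Polynomial (Matrix (Fin p) (Fin p) ℝ)), Q.natDegree ≤ n →
      ∃ c : ℕ → Matrix (Fin p) (Fin p) ℝ,
        Q = ∑ j ∈ Finset.range (n + 1), Polynomial.C (c j) * B j ∧ c n = Q.coeff n := by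
  intro n
  induction n with
  | zero =>
    intro Q hQ
    refine ⟨fun _ => Q.coeff 0, ?_, rfl⟩
    have hB0 : B 0 = 1 := by
      have h1 := (hmon 0).coeff_natDegree
      rw [hdeg 0] at h1
      rw [Polynomial.eq_C_of_natDegree_le_zero (le_of_eq (hdeg 0)), h1, Polynomial.C_1]
    rw [show (0 : ℕ) + 1 = 1 from rfl, Finset.sum_range_one, hB0, mul_one]
    exact Polynomial.eq_C_of_natDegree_le_zero hQ
  | succ n ih =>
    intro Q hQ
    set Q' := Q - Polynomial.C (Q.coeff (n + 1)) * B (n + 1) with hQ'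
    have hQ'deg : Q'.natDegree ≤ n := by
      rw [Polynomial.natDegree_le_iff_coeff_eq_zero]
      intro k hk
      rw [hQ', Polynomial.coeff_sub, Polynomial.coeff_C_mul]
      rcases eq_or_lt_of_le (show n + 1 ≤ k by omega) with h | h
      · have hb := (hmon (n + 1)).coeff_natDegree
        rw [hdeg (n + 1)] at hb
        rw [← h, hb, mul_one, sub_self]
      · rw [Polynomial.coeff_eq_zero_of_natDegree_lt (p := Q) (by omega),
          Polynomial.coeff_eq_zero_of_natDegree_lt (p := B (n + 1)) (by rw [hdeg]; omega)]
        simp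
    obtain ⟨c, hc, -⟩ := ih Q' hQ'deg
    refine ⟨fun j => if j = n + 1 then Q.coeff (n + 1) else c j, ?_, by simp⟩
    rw [Finset.sum_range_succ]
    simp only [if_pos rfl]
    have hsum : (∑ j ∈ Finset.range (n + 1),
        Polynomial.C (if j = n + 1 then Q.coeff (n + 1) else c j) * B j)
        = ∑ j ∈ Finset.range (n + 1), Polynomial.C (c j) * B j := by
      refine Finset.sum_congr rfl fun j hj => ?_
      simp only [Finset.mem_range] at hj
      rw [if_neg (by omega)]
    rw [hsum, ← hc, hQ']
    simp

end Christoffel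

/-- Degree-one Christoffel formula: for the perturbation `W(x) = I_p x − A` of the moment
sequence `m` (whose moments become `m̂_k = m_{k+1} − A m_k`), assuming all right evaluations
`P_n⁽¹⁾(A)` are nonsingular, the perturbed monic bi-orthogonal polynomials satisfy
`P̂_n⁽¹⁾(x)(I_p x − A) = P_{n+1}⁽¹⁾(x) − P_{n+1}⁽¹⁾(A)[P_n⁽¹⁾(A)]⁻¹ P_n⁽¹⁾(x)` and the
perturbed norms are `Ĥ_n = −P_{n+1}⁽¹⁾(A)[P_n⁽¹⁾(A)]⁻¹ H_n`. -/
theorem degree_one_christoffel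
    (p : ℕ) (m : ℕ → Matrix (Fin p) (Fin p) ℝ) (A : Matrix (Fin p) (Fin p) ℝ)
    (P1 P2 Ph1 Ph2 : ℕ → Polynomial (Matrix (Fin p) (Fin p) ℝ))
    (H Hh : ℕ → Matrix (Fin p) (Fin p) ℝ)
    (hmon1 : ∀ k, (P1 k).Monic) (hdeg1 : ∀ k, (P1 k).natDegree = k)
    (hmon2 : ∀ k, (P2 k).Monic) (hdeg2 : ∀ k, (P2 k).natDegree = k)
    (hmonh1 : ∀ k, (Ph1 k).Monic) (hdegh1 : ∀ k, (Ph1 k).natDegree = k)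
    (hmonh2 : ∀ k, (Ph2 k).Monic) (hdegh2 : ∀ k, (Ph2 k).natDegree = k)
    (hbi : ∀ k l, matPair p m (P1 k) (P2 l) = if k = l then H k else 0)
    (hbih : ∀ k l, matPair p (fun r => m (r + 1) - A * m r) (Ph1 k) (Ph2 l)
      = if k = l then Hh k else 0)
    (hH : ∀ k, IsUnit (H k).det) (hHh : ∀ k, IsUnit (Hh k).det)
    (hPA : ∀ n, IsUnit (rightEval p (P1 n) A)) :
    ∀ n : ℕ,
      Ph1 n * (Polynomial.X - Polynomial.C A)
        = P1 (n + 1) -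
            Polynomial.C (rightEval p (P1 (n + 1)) A * (rightEval p (P1 n) A)⁻¹) * P1 n
      ∧ Hh n = -(rightEval p (P1 (n + 1)) A * (rightEval p (P1 n) A)⁻¹) * H n := by
  intro n
  rcases Nat.eq_zero_or_pos p with rfl | hp
  · haveI : Subsingleton (Matrix (Fin 0) (Fin 0) ℝ) := ⟨fun a b => by ext i; exact i.elim0⟩
    exact ⟨Subsingleton.elim _ _, Subsingleton.elim _ _⟩
  haveI : Nonempty (Fin p) := ⟨⟨0, hp⟩⟩
  haveI : Nontrivial (Matrix (Fin p) (Fin p) ℝ) := inferInstance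
  open Christoffel in
  set E : ℕ → Matrix (Fin p) (Fin p) ℝ := fun k => rightEval p (P1 k) A with hE
  set Mo := E (n + 1) * (E n)⁻¹ with hMo
  set R := Ph1 n * (Polynomial.X - Polynomial.C A) with hR
  set S := P1 (n + 1) - Polynomial.C Mo * P1 n with hS
  have hXC : (Polynomial.X - Polynomial.C A).Monic := Polynomial.monic_X_sub_C A
  have hRmon : R.Monic := (hmonh1 n).mul hXC
  have hRdeg : R.natDegree = n + 1 := by
    rw [hR, (hmonh1 n).natDegree_mul hXC, hdegh1, Polynomial.natDegree_X_sub_C]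
  have hEinv : ∀ k, E k * (E k)⁻¹ = 1 := fun k =>
    Matrix.mul_nonsing_inv _ ((Matrix.isUnit_iff_isUnit_det _).1 (hPA k))
  have hEinv' : (E n)⁻¹ * E n = 1 :=
    Matrix.nonsing_inv_mul _ ((Matrix.isUnit_iff_isUnit_det _).1 (hPA n))
  -- orthogonality of R against P2 l for l < n
  have horthR : ∀ l, l < n → matPair p m R (P2 l) = 0 := by
    intro l hl
    rw [hR, matPair_mul_X_sub_C]
    obtain ⟨d, hd, -⟩ := exists_expand Ph2 hmonh2 hdegh2 l (P2 l) (le_of_eq (hdeg2 l))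
    rw [hd, matPair_sum_right]
    refine Finset.sum_eq_zero fun j hj => ?_
    simp only [Finset.mem_range] at hj
    rw [matPair_smul_right, hbih n j, if_neg (by omega), Matrix.zero_mul]
  have horthS : ∀ l, l < n → matPair p m S (P2 l) = 0 := by
    intro l hl
    rw [hS, matPair_sub_left, matPair_smul_left, hbi, hbi,
      if_neg (by omega : ¬ n + 1 = l), if_neg (by omega : ¬ n = l)]
    simp
  -- R - S has degree ≤ n
  have hDdeg : (R - S).natDegree ≤ n := by
    rw [Polynomial.natDegree_le_iff_coeff_eq_zero]
    intro k hk
    rw [Polynomial.coeff_sub, hS, Polynomial.coeff_sub, Polynomial.coeff_C_mul]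
    rcases eq_or_lt_of_le (show n + 1 ≤ k by omega) with h | h
    · subst h
      have h1 : R.coeff (n + 1) = 1 := by
        have h1' := hRmon.coeff_natDegree
        rwa [hRdeg] at h1'
      have h2 : (P1 (n + 1)).coeff (n + 1) = 1 := by
        have h2' := (hmon1 (n + 1)).coeff_natDegree
        rwa [hdeg1 (n + 1)] at h2'
      have h3 : (P1 n).coeff (n + 1) = 0 :=
        Polynomial.coeff_eq_zero_of_natDegree_lt (by rw [hdeg1]; omega)
      rw [h1, h2, h3, mul_zero, sub_zero, sub_self]
    · rw [Polynomial.coeff_eq_zero_of_natDegree_lt (p := R) (by omega),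
        Polynomial.coeff_eq_zero_of_natDegree_lt (p := P1 (n + 1)) (by rw [hdeg1]; omega),
        Polynomial.coeff_eq_zero_of_natDegree_lt (p := P1 n) (by rw [hdeg1]; omega)]
      simp
  obtain ⟨c, hc, -⟩ := exists_expand P1 hmon1 hdeg1 n (R - S) hDdeg
  -- lower coefficients vanish
  have hcl : ∀ l, l < n → c l = 0 := by
    intro l hl
    have h0 : matPair p m (R - S) (P2 l) = 0 := by
      rw [matPair_sub_left, horthR l hl, horthS l hl, sub_self]
    rw [hc, matPair_sum_left] at h0
    have hterm : ∀ j ∈ Finset.range (n + 1),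
        matPair p m (Polynomial.C (c j) * P1 j) (P2 l)
          = if j = l then c l * H l else 0 := by
      intro j _
      rw [matPair_smul_left, hbi]
      by_cases h : j = l
      · subst h; simp
      · simp [h]
    rw [Finset.sum_congr rfl hterm, Finset.sum_ite_eq' (Finset.range (n + 1)) l,
      if_pos (Finset.mem_range.2 (by omega))] at h0
    calc c l = c l * H l * (H l)⁻¹ := by
          rw [Matrix.mul_assoc, Matrix.mul_nonsing_inv _ (hH l), Matrix.mul_one]
      _ = 0 := by rw [h0, Matrix.zero_mul]
  have hDn : R - S = Polynomial.C (c n) * P1 n := by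
    rw [hc, Finset.sum_range_succ, Finset.sum_eq_zero, zero_add]
    intro j hj
    simp only [Finset.mem_range] at hj
    rw [hcl j hj]
    simp
  -- right evaluation of R - S at A vanishes
  have hRA : rightEval p R A = 0 := by rw [hR]; exact rightEval_mul_X_sub_C _ _
  have hSA : rightEval p S A = 0 := by
    rw [hS, rightEval_sub, rightEval_smul]
    show E (n + 1) - Mo * E n = 0
    rw [hMo, Matrix.mul_assoc, hEinv', Matrix.mul_one, sub_self]
  have hcn : c n = 0 := by
    have h0 : c n * E n = 0 := by
      have h1 : rightEval p (R - S) A = 0 := by rw [rightEval_sub, hRA, hSA, sub_self]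
      rw [hDn, rightEval_smul] at h1
      exact h1
    calc c n = c n * E n * (E n)⁻¹ := by
          rw [Matrix.mul_assoc, hEinv n, Matrix.mul_one]
      _ = 0 := by rw [h0, Matrix.zero_mul]
  have hpart1 : R = S := by
    have : R - S = 0 := by rw [hDn, hcn]; simp
    exact sub_eq_zero.1 this
  refine ⟨hpart1, ?_⟩
  -- part 2
  have h2 : Hh n = matPair p m R (Ph2 n) := by
    rw [hR, matPair_mul_X_sub_C, hbih n n, if_pos rfl]
  obtain ⟨d, hd, hdn⟩ := exists_expand P2 hmon2 hdeg2 n (Ph2 n) (le_of_eq (hdegh2 n))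
  have hdn1 : d n = 1 := by
    have h' := (hmonh2 n).coeff_natDegree
    rw [hdegh2 n] at h'
    rw [hdn]; exact h'
  have h3 : matPair p m S (Ph2 n) = -(Mo * H n) := by
    rw [hS, hd, matPair_sub_left, matPair_smul_left, matPair_sum_right, matPair_sum_right]
    have hA : (∑ j ∈ Finset.range (n + 1),
        matPair p m (P1 (n + 1)) (Polynomial.C (d j) * P2 j)) = 0 := by
      refine Finset.sum_eq_zero fun j hj => ?_
      simp only [Finset.mem_range] at hj
      rw [matPair_smul_right, hbi, if_neg (by omega), Matrix.zero_mul]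
    have hB : (∑ j ∈ Finset.range (n + 1),
        matPair p m (P1 n) (Polynomial.C (d j) * P2 j)) = H n := by
      have hterm : ∀ j ∈ Finset.range (n + 1),
          matPair p m (P1 n) (Polynomial.C (d j) * P2 j)
            = if j = n then H n else 0 := by
        intro j _
        rw [matPair_smul_right, hbi]
        by_cases h : j = n
        · subst h; simp [hdn1]
        · simp [h, Ne.symm h]
      rw [Finset.sum_congr rfl hterm, Finset.sum_ite_eq' (Finset.range (n + 1)) n,
        if_pos (Finset.mem_range.2 (by omega))]
    rw [hA, hB, zero_sub]
  rw [h2, hpart1, h3, neg_mul]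
end

section
/- The Chebyshev combinations satisfy the first-order differential relation ((x ∓ 1) d/dx + 1/2)(U_n(x) ± U_{n-1}(x)) = (n + 1/2)(U_n(x) ∓ U_{n-1}(x)) for all n ≥ 0 (with U_{-1} = 0), and consequently the second-order equation ((x²−1) d²/dx² + (2x ∓ 1) d/dx + 1/4)(U_n(x) ∓ U_{n-1}(x)) = (n + 1/2)²(U_n(x) ∓ U_{n-1}(x)). -/
open Polynomial Polynomial.Chebyshev


private lemma cheb_fact1 (n : ℤ) :
    (X - 1 : ℝ[X]) * (U ℝ n + U ℝ (n - 1)) = T ℝ (n + 1) - T ℝ n := by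
  have h1 := T_eq_U_sub_X_mul_U ℝ n
  have h2 := T_eq_U_sub_X_mul_U ℝ (n + 1)
  have h3 := U_add_one ℝ n
  simp only [add_sub_cancel_right] at h2
  linear_combination h1 - h2 - h3

private lemma cheb_fact2 (n : ℤ) :
    (X + 1 : ℝ[X]) * (U ℝ n - U ℝ (n - 1)) = T ℝ (n + 1) + T ℝ n := by
  have h1 := T_eq_U_sub_X_mul_U ℝ n
  have h2 := T_eq_U_sub_X_mul_U ℝ (n + 1)
  have h3 := U_add_one ℝ n
  simp only [add_sub_cancel_right] at h2
  linear_combination -h1 - h2 - h3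

private lemma chC2 : C (1/2 : ℝ) + C (1/2 : ℝ) = (1 : ℝ[X]) := by
  rw [← C_add]; norm_num

private lemma cheb_h1 (n : ℕ) :
    (X - 1 : ℝ[X]) * (derivative (U ℝ (n:ℤ)) + derivative (U ℝ ((n:ℤ) - 1))) +
        C (1/2 : ℝ) * (U ℝ (n:ℤ) + U ℝ ((n:ℤ) - 1))
      = C ((n : ℝ) + 1/2) * (U ℝ (n:ℤ) - U ℝ ((n:ℤ) - 1)) := by
  have hd := congrArg derivative (cheb_fact1 (n:ℤ))
  simp only [derivative_mul, derivative_add, derivative_sub, derivative_X, derivative_one,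
    T_derivative_eq_U, add_sub_cancel_right, zero_mul, sub_zero, one_mul, mul_one] at hd
  push_cast at hd
  have hC : C ((n : ℝ) + 1/2) = (n : ℝ[X]) + C (1/2 : ℝ) := by
    rw [C_add, C_eq_natCast]
  rw [hC]
  linear_combination hd + U ℝ ((n:ℤ) - 1) * chC2

private lemma cheb_h2 (n : ℕ) :
    (X + 1 : ℝ[X]) * (derivative (U ℝ (n:ℤ)) - derivative (U ℝ ((n:ℤ) - 1))) +
        C (1/2 : ℝ) * (U ℝ (n:ℤ) - U ℝ ((n:ℤ) - 1))
      = C ((n : ℝ) + 1/2) * (U ℝ (n:ℤ) + U ℝ ((n:ℤ) - 1)) := by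
  have hd := congrArg derivative (cheb_fact2 (n:ℤ))
  simp only [derivative_mul, derivative_add, derivative_sub, derivative_X, derivative_one,
    T_derivative_eq_U, add_sub_cancel_right, zero_mul, sub_zero, one_mul, mul_one] at hd
  push_cast at hd
  have hC : C ((n : ℝ) + 1/2) = (n : ℝ[X]) + C (1/2 : ℝ) := by
    rw [C_add, C_eq_natCast]
  rw [hC]
  linear_combination hd - U ℝ ((n:ℤ) - 1) * chC2

/-- First-order differential relations
`((x ∓ 1) d/dx + 1/2)(U_n ± U_{n-1}) = (n + 1/2)(U_n ∓ U_{n-1})` and the consequent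
second-order equations
`((x²−1) d²/dx² + (2x ∓ 1) d/dx + 1/4)(U_n ∓ U_{n-1}) = (n + 1/2)²(U_n ∓ U_{n-1})`
for the Chebyshev polynomials of the second kind (with `U_{-1} = 0`). -/
theorem chebyshev_differential_relations :
    (∀ n : ℕ,
      (Polynomial.X - 1) * Polynomial.derivative (U ℝ (n:ℤ) + U ℝ ((n:ℤ) - 1)) +
          Polynomial.C (1/2 : ℝ) * (U ℝ (n:ℤ) + U ℝ ((n:ℤ) - 1))
        = Polynomial.C ((n : ℝ) + 1/2) * (U ℝ (n:ℤ) - U ℝ ((n:ℤ) - 1))) ∧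
    (∀ n : ℕ,
      (Polynomial.X + 1) * Polynomial.derivative (U ℝ (n:ℤ) - U ℝ ((n:ℤ) - 1)) +
          Polynomial.C (1/2 : ℝ) * (U ℝ (n:ℤ) - U ℝ ((n:ℤ) - 1))
        = Polynomial.C ((n : ℝ) + 1/2) * (U ℝ (n:ℤ) + U ℝ ((n:ℤ) - 1))) ∧
    (∀ n : ℕ,
      (Polynomial.X ^ 2 - 1) *
            Polynomial.derivative (Polynomial.derivative (U ℝ (n:ℤ) - U ℝ ((n:ℤ) - 1))) +
          (2 * Polynomial.X - 1) * Polynomial.derivative (U ℝ (n:ℤ) - U ℝ ((n:ℤ) - 1)) +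
          Polynomial.C (1/4 : ℝ) * (U ℝ (n:ℤ) - U ℝ ((n:ℤ) - 1))
        = Polynomial.C (((n : ℝ) + 1/2) ^ 2) * (U ℝ (n:ℤ) - U ℝ ((n:ℤ) - 1))) ∧
    (∀ n : ℕ,
      (Polynomial.X ^ 2 - 1) *
            Polynomial.derivative (Polynomial.derivative (U ℝ (n:ℤ) + U ℝ ((n:ℤ) - 1))) +
          (2 * Polynomial.X + 1) * Polynomial.derivative (U ℝ (n:ℤ) + U ℝ ((n:ℤ) - 1)) +
          Polynomial.C (1/4 : ℝ) * (U ℝ (n:ℤ) + U ℝ ((n:ℤ) - 1))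
        = Polynomial.C (((n : ℝ) + 1/2) ^ 2) * (U ℝ (n:ℤ) + U ℝ ((n:ℤ) - 1))) := by
  refine ⟨fun n => ?_, fun n => ?_, fun n => ?_, fun n => ?_⟩
  · simpa only [derivative_add] using cheb_h1 n
  · simpa only [derivative_sub] using cheb_h2 n
  · have hd := congrArg derivative (cheb_h2 n)
    simp only [derivative_mul, derivative_add, derivative_sub, derivative_X,
      derivative_one, derivative_C, zero_mul, mul_zero, add_zero, zero_add,
      sub_zero, one_mul, mul_one] at hd
    simp only [derivative_sub]
    have hC4 : C (1/4 : ℝ) = C (1/2 : ℝ) * C (1/2 : ℝ) := by rw [← Polynomial.C_mul]; norm_num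
    have hCsq : C (((n:ℝ) + 1/2)^2) = C ((n:ℝ)+1/2) * C ((n:ℝ)+1/2) := by
      rw [sq, Polynomial.C_mul]
    linear_combination (X - 1 : ℝ[X]) * hd + C (1/2 : ℝ) * cheb_h2 n +
      C ((n:ℝ)+1/2) * cheb_h1 n -
      X * (derivative (U ℝ (n:ℤ)) - derivative (U ℝ ((n:ℤ)-1))) * chC2 +
      (U ℝ (n:ℤ) - U ℝ ((n:ℤ)-1)) * hC4 - (U ℝ (n:ℤ) - U ℝ ((n:ℤ)-1)) * hCsq
  · have hd := congrArg derivative (cheb_h1 n)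
    simp only [derivative_mul, derivative_add, derivative_sub, derivative_X,
      derivative_one, derivative_C, zero_mul, mul_zero, add_zero, zero_add,
      sub_zero, one_mul, mul_one] at hd
    simp only [derivative_add]
    have hC4 : C (1/4 : ℝ) = C (1/2 : ℝ) * C (1/2 : ℝ) := by rw [← Polynomial.C_mul]; norm_num
    have hCsq : C (((n:ℝ) + 1/2)^2) = C ((n:ℝ)+1/2) * C ((n:ℝ)+1/2) := by
      rw [sq, Polynomial.C_mul]
    linear_combination (X + 1 : ℝ[X]) * hd + C (1/2 : ℝ) * cheb_h1 n +
      C ((n:ℝ)+1/2) * cheb_h2 n -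
      X * (derivative (U ℝ (n:ℤ)) + derivative (U ℝ ((n:ℤ)-1))) * chC2 +
      (U ℝ (n:ℤ) + U ℝ ((n:ℤ)-1)) * hC4 + (-(U ℝ (n:ℤ)) - U ℝ ((n:ℤ)-1)) * hCsq
end
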